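/- arXiv:2107.06661 — 2 statements merged into one kernel-verified Lean document; each statement's English description precedes it below -/
import Mathlib

section
/- Let Δ and γ be real numbers with 0 ≤ Δ and 0 < γ < 1, let t₀ ≥ 1 be a natural number, and suppose Δ < γ^(t₀-1). Let r : ℕ → ℝ satisfy 0 ≤ r t ≤ Δ for every t, and let s : ℕ → ℝ satisfy 0 ≤ s t ≤ 1 for every t and s t = 1 for every t ≥ t₀ - 1. Then ∑'_{t=0}^∞ γ^t · r t < ∑'_{t=0}^∞ γ^t · s t. -/
/-- Deterministic-trajectory core of Theorem 1 (FV-RS): if `γ ^ (t₀ - 1) > Δ`, a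
trajectory reaching the goal within `t₀ - 1` steps and staying there has strictly
larger discounted return than any trajectory that never enters the goal. -/
theorem goal_trajectory_dominates
    (Δ γ : ℝ) (hΔ0 : 0 ≤ Δ) (hγ0 : 0 < γ) (hγ1 : γ < 1)
    (t₀ : ℕ) (ht₀ : 1 ≤ t₀) (hfav : Δ < γ ^ (t₀ - 1))
    (r : ℕ → ℝ) (hr : ∀ t, 0 ≤ r t ∧ r t ≤ Δ)
    (s : ℕ → ℝ) (hs : ∀ t, 0 ≤ s t ∧ s t ≤ 1)
    (hs1 : ∀ t, t₀ - 1 ≤ t → s t = 1) :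
    (∑' t : ℕ, γ ^ t * r t) < ∑' t : ℕ, γ ^ t * s t := by
  set n := t₀ - 1 with hn
  have hγabs : |γ| < 1 := by rw [abs_of_pos hγ0]; exact hγ1
  have hgeo : Summable (fun t : ℕ => γ ^ t) := summable_geometric_of_lt_one hγ0.le hγ1
  have hpow : ∀ t : ℕ, (0:ℝ) ≤ γ ^ t := fun t => pow_nonneg hγ0.le t
  -- summability of both series
  have hsum_r : Summable (fun t : ℕ => γ ^ t * r t) := by
    apply Summable.of_nonneg_of_le (fun t => mul_nonneg (hpow t) (hr t).1)
      (fun t => ?_) (hgeo.mul_right Δ)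
    exact mul_le_mul_of_nonneg_left (hr t).2 (hpow t)
  have hsum_s : Summable (fun t : ℕ => γ ^ t * s t) := by
    apply Summable.of_nonneg_of_le (fun t => mul_nonneg (hpow t) (hs t).1)
      (fun t => ?_) hgeo
    calc γ ^ t * s t ≤ γ ^ t * 1 := mul_le_mul_of_nonneg_left (hs t).2 (hpow t)
      _ = γ ^ t := mul_one _
  have h1γ : (0:ℝ) < 1 - γ := by linarith
  -- upper bound for r-series
  have hub : (∑' t : ℕ, γ ^ t * r t) ≤ Δ * (1 - γ)⁻¹ := by
    have := Summable.tsum_le_tsum (f := fun t : ℕ => γ ^ t * r t)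
      (g := fun t : ℕ => γ ^ t * Δ)
      (fun t => mul_le_mul_of_nonneg_left (hr t).2 (hpow t)) hsum_r (hgeo.mul_right Δ)
    calc (∑' t : ℕ, γ ^ t * r t) ≤ ∑' t : ℕ, γ ^ t * Δ := this
      _ = (∑' t : ℕ, γ ^ t) * Δ := by rw [tsum_mul_right]
      _ = (1 - γ)⁻¹ * Δ := by rw [tsum_geometric_of_lt_one hγ0.le hγ1]
      _ = Δ * (1 - γ)⁻¹ := mul_comm _ _
  -- lower bound for s-series via tail
  have hlb : γ ^ n * (1 - γ)⁻¹ ≤ ∑' t : ℕ, γ ^ t * s t := by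
    have hshift : (∑' t : ℕ, γ ^ (n + t)) = γ ^ n * (1 - γ)⁻¹ := by
      have : (fun t : ℕ => γ ^ (n + t)) = fun t : ℕ => γ ^ n * γ ^ t := by
        funext t; rw [pow_add]
      rw [this, tsum_mul_left, tsum_geometric_of_lt_one hγ0.le hγ1]
    -- compare with indicator function
    set g : ℕ → ℝ := fun t => if n ≤ t then γ ^ t else 0 with hg
    have hsum_g : Summable g := by
      apply Summable.of_nonneg_of_le (fun t => ?_) (fun t => ?_) hgeo
      · by_cases h : n ≤ t <;> simp [hg, h, hpow t]
      · by_cases h : n ≤ t <;> simp [hg, h, hpow t]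
    have hgs : ∀ t, g t ≤ γ ^ t * s t := by
      intro t
      by_cases h : n ≤ t
      · simp only [hg, if_pos h]
        rw [hs1 t h, mul_one]
      · simp only [hg, if_neg h]
        exact mul_nonneg (hpow t) (hs t).1
    have hcmp := Summable.tsum_le_tsum hgs hsum_g hsum_s
    have hgval : (∑' t : ℕ, g t) = γ ^ n * (1 - γ)⁻¹ := by
      rw [← hshift]
      have hinj : Function.Injective (fun t : ℕ => n + t) := add_right_injective n
      have hzero : Function.support g ⊆ Set.range (fun t : ℕ => n + t) := by
        intro x hx
        by_cases h : n ≤ x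
        · exact ⟨x - n, by simpa using Nat.add_sub_cancel' h⟩
        · exfalso; apply hx; simp [hg, h]
      have := hinj.tsum_eq hzero
      rw [← this]
      apply tsum_congr
      intro t
      simp [hg, Nat.le_add_right]
    linarith
  have hkey : Δ * (1 - γ)⁻¹ < γ ^ n * (1 - γ)⁻¹ :=
    mul_lt_mul_of_pos_right hfav (inv_pos.mpr h1γ)
  linarith
end

section
/- Let Δ and γ be real numbers with 0 < Δ < 1 and 0 < γ < 1, let w ≥ 1 and k ≥ 1 be natural numbers, and suppose Δ < γ^(w-1). Let s : ℕ → ℝ satisfy 0 ≤ s t ≤ Δ^k for every t, and let r : ℕ → ℝ satisfy 0 ≤ r t ≤ 1 for every t and r t ≥ Δ^(k-1) for every t ≥ w - 1. Then ∑'_{t=0}^∞ γ^t · s t < ∑'_{t=0}^∞ γ^t · r t. -/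
/-- Trajectory-level content of the corollary to Theorem 3: under
`Δ < γ ^ (w - 1)`, a trajectory that advances to the next step by time `w - 1`
and thereafter collects reward at least `Δ ^ (k-1)` strictly dominates any
trajectory whose reward never exceeds `Δ ^ k`. -/
theorem stepwise_trajectory_dominates
    (Δ γ : ℝ) (hΔ0 : 0 < Δ) (hΔ1 : Δ < 1) (hγ0 : 0 < γ) (hγ1 : γ < 1)
    (w k : ℕ) (hw : 1 ≤ w) (hk : 1 ≤ k)
    (hfav : Δ < γ ^ (w - 1))
    (s : ℕ → ℝ) (hs : ∀ t, 0 ≤ s t ∧ s t ≤ Δ ^ k)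
    (r : ℕ → ℝ) (hr : ∀ t, 0 ≤ r t ∧ r t ≤ 1)
    (hr1 : ∀ t, w - 1 ≤ t → Δ ^ (k - 1) ≤ r t) :
    (∑' t : ℕ, γ ^ t * s t) < ∑' t : ℕ, γ ^ t * r t := by
  have hγ0' : (0:ℝ) ≤ γ := hγ0.le
  have habs : |γ| < 1 := by rw [abs_of_nonneg hγ0']; exact hγ1
  have hgeo : Summable (fun t : ℕ => γ ^ t) := summable_geometric_of_lt_one hγ0' hγ1
  have hΔk : (0:ℝ) < Δ ^ k := pow_pos hΔ0 k
  have hΔk1 : (0:ℝ) < Δ ^ (k-1) := pow_pos hΔ0 _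
  -- summability
  have hS : Summable (fun t : ℕ => γ ^ t * s t) := by
    apply Summable.of_nonneg_of_le
      (fun t => mul_nonneg (pow_nonneg hγ0' t) (hs t).1)
      (fun t => mul_le_mul_of_nonneg_left (hs t).2 (pow_nonneg hγ0' t))
      (hgeo.mul_right _)
  have hR : Summable (fun t : ℕ => γ ^ t * r t) := by
    apply Summable.of_nonneg_of_le
      (fun t => mul_nonneg (pow_nonneg hγ0' t) (hr t).1)
      (fun t => by
        have := mul_le_mul_of_nonneg_left (hr t).2 (pow_nonneg hγ0' t)
        simpa using this)
      hgeo
  -- LHS bound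
  have h1 : (∑' t : ℕ, γ ^ t * s t) ≤ Δ ^ k / (1 - γ) := by
    have := Summable.tsum_le_tsum (f := fun t : ℕ => γ ^ t * s t)
      (g := fun t : ℕ => γ ^ t * Δ ^ k)
      (fun t => mul_le_mul_of_nonneg_left (hs t).2 (pow_nonneg hγ0' t))
      hS (hgeo.mul_right _)
    calc (∑' t : ℕ, γ ^ t * s t) ≤ ∑' t : ℕ, γ ^ t * Δ ^ k := this
      _ = (∑' t : ℕ, γ ^ t) * Δ ^ k := tsum_mul_right
      _ = Δ ^ k / (1 - γ) := by
          rw [tsum_geometric_of_lt_one hγ0' hγ1]; ring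
  -- middle strict inequality
  have hkey : Δ ^ k < γ ^ (w - 1) * Δ ^ (k - 1) := by
    have : Δ ^ k = Δ * Δ ^ (k - 1) := by
      rw [← pow_succ']
      congr 1
      omega
    rw [this]
    exact mul_lt_mul_of_pos_right hfav hΔk1
  have h2 : Δ ^ k / (1 - γ) < γ ^ (w - 1) * Δ ^ (k - 1) / (1 - γ) :=
    (div_lt_div_iff_of_pos_right (by linarith)).mpr hkey
  -- RHS bound: sum over shifted indices
  have h3 : γ ^ (w - 1) * Δ ^ (k - 1) / (1 - γ) ≤ ∑' t : ℕ, γ ^ t * r t := by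
    have hshift : (∑' n : ℕ, γ ^ (n + (w - 1)) * Δ ^ (k - 1))
        = γ ^ (w - 1) * Δ ^ (k - 1) / (1 - γ) := by
      have : (fun n : ℕ => γ ^ (n + (w - 1)) * Δ ^ (k - 1))
          = fun n : ℕ => γ ^ n * (γ ^ (w - 1) * Δ ^ (k - 1)) := by
        funext n; rw [pow_add]; ring
      rw [this, tsum_mul_right, tsum_geometric_of_lt_one hγ0' hγ1]
      ring
    rw [← hshift]
    have hsum2 : Summable (fun n : ℕ => γ ^ (n + (w - 1)) * r (n + (w - 1))) :=
      (hR.comp_injective (add_left_injective (w - 1)))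
    calc (∑' n : ℕ, γ ^ (n + (w - 1)) * Δ ^ (k - 1))
        ≤ ∑' n : ℕ, γ ^ (n + (w - 1)) * r (n + (w - 1)) := by
          apply Summable.tsum_le_tsum _ _ hsum2
          · intro n
            exact mul_le_mul_of_nonneg_left (hr1 _ (Nat.le_add_left _ _))
              (pow_nonneg hγ0' _)
          · exact (hgeo.comp_injective (add_left_injective (w - 1))).mul_right _
      _ ≤ ∑' t : ℕ, γ ^ t * r t := by
          apply Summable.tsum_le_tsum_of_inj (fun n : ℕ => n + (w - 1))
            (add_left_injective (w - 1))
            (fun t _ => mul_nonneg (pow_nonneg hγ0' t) (hr t).1)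
            (fun n => le_refl _) hsum2 hR
  linarith
end
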